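/- Let ε be a countable ordinal and (Λ, h) ∈ Y_ε. Then for every Hechler condition (ν, f) ∈ 𝔻 there exists η ∈ Ω_Λ⁺ such that the condition (η, η⌢0^ω) is compatible with (ν, f); that is, I_Λ meets every condition of 𝔻 compatibly (together with being an antichain, I_Λ is a maximal antichain in 𝔻). -/

import Mathlib

/-- A Hechler condition: a pair `(t, f)` where the function `f : ℕ → ℕ` extends
the finite sequence `t`. -/
def HCond (p : List ℕ × (ℕ → ℕ)) : Prop :=
  ∀ i < p.1.length, p.2 i = p.1.getD i 0

/-- The Hechler order: `(t, f) ≤ (t', f')` iff `t` is an initial segment of `t'`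
and `f n ≤ f' n` for all `n`. -/
def HLe (p q : List ℕ × (ℕ → ℕ)) : Prop :=
  p.1 <+: q.1 ∧ ∀ n, p.2 n ≤ q.2 n

/-- Compatibility of Hechler conditions. -/
def HCompat (p q : List ℕ × (ℕ → ℕ)) : Prop :=
  ∃ r, HCond r ∧ HLe p r ∧ HLe q r

/-- `t` is an initial segment of the function `x : ℕ → ℕ`. -/
def PrefixOf (t : List ℕ) (x : ℕ → ℕ) : Prop :=
  ∀ i < t.length, x i = t.getD i 0

/-- `set(p)`: the reals extending the trunk of `p` and dominating its side function. -/
def HSet (p : List ℕ × (ℕ → ℕ)) : Set (ℕ → ℕ) :=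
  {x | PrefixOf p.1 x ∧ ∀ n, p.2 n ≤ x n}

/-- `X` is `𝔻`-nowhere dense. -/
def HNwd (X : Set (ℕ → ℕ)) : Prop :=
  ∀ p, HCond p → ∃ q, HCond q ∧ HLe p q ∧ HSet q ∩ X = ∅

/-- The ideal `I_{𝔻,ℵ₀}`: sets covered by countably many `𝔻`-nowhere dense sets. -/
def HIdeal (X : Set (ℕ → ℕ)) : Prop :=
  ∃ B : ℕ → Set (ℕ → ℕ), (∀ n, HNwd (B n)) ∧ X ⊆ ⋃ n, B n



/-- The tree conditions (i)-(iii) on `Λ` from the definition of `Y_ε`. -/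
def LamTree (Λ : Set (List ℕ)) : Prop :=
  Λ.Nonempty ∧
  (∀ ρ ∈ Λ, ∀ σ : List ℕ, σ <+: ρ → σ ∈ Λ) ∧
  (∀ ρ ∈ Λ, (∀ k : ℕ, ρ ++ [k] ∈ Λ) ∨ (∀ k : ℕ, ρ ++ [k] ∉ Λ)) ∧
  (∀ ν₁ ν₂ : List ℕ, ν₁.length = ν₂.length → ν₁ ∈ Λ →
      (∀ l, ν₁.getD l 0 ≤ ν₂.getD l 0) → ν₂ ∈ Λ) ∧
  ¬ ∃ x : ℕ → ℕ, ∀ n : ℕ, (List.ofFn fun i : Fin n => x i) ∈ Λ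

/-- The conditions on the rank function `h : Λ → ε + 1` from the definition of `Y_ε`. -/
def LamRank (ε : Ordinal) (Λ : Set (List ℕ)) (h : List ℕ → Ordinal) : Prop :=
  (∀ ρ ∈ Λ, h ρ ≤ ε) ∧
  h [] = ε ∧
  (∀ ρ₁ ∈ Λ, ∀ ρ₂ ∈ Λ, ρ₁ <+: ρ₂ → ρ₁ ≠ ρ₂ → h ρ₂ < h ρ₁) ∧
  (∀ ρ ∈ Λ, ∀ ζ : Ordinal, h ρ = ζ + 1 → ∀ k : ℕ, ρ ++ [k] ∈ Λ → h (ρ ++ [k]) = ζ) ∧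
  (∀ ρ ∈ Λ, Order.IsSuccLimit (h ρ) →
      ∀ β < h ρ, ∃ K : ℕ, ∀ k ≥ K, ρ ++ [k] ∈ Λ → β ≤ h (ρ ++ [k]))

/-- `(Λ, h) ∈ Y_ε`. -/
def MemY (ε : Ordinal) (Λ : Set (List ℕ)) (h : List ℕ → Ordinal) : Prop :=
  LamTree Λ ∧ LamRank ε Λ h

/-- `max(Λ)`: the elements of `Λ` with no proper extension in `Λ`. -/
def maxLam (Λ : Set (List ℕ)) : Set (List ℕ) :=
  {ρ ∈ Λ | ∀ σ ∈ Λ, ρ <+: σ → σ = ρ}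

/-- `Ω_M`: sequences of the form `η₀⌢⟨2n₀+1⟩⌢η₁⌢⟨2n₁+1⟩⌢⋯⌢η_k` with all `ηᵢ ∈ M`. -/
inductive InOmega (M : Set (List ℕ)) : List ℕ → Prop
  | base : ∀ η ∈ M, InOmega M η
  | step : ∀ ν, InOmega M ν → ∀ (n : ℕ), ∀ η ∈ M, InOmega M (ν ++ (2 * n + 1) :: η)

/-- `Ω_M⁺ = {ν⌢⟨2n⟩ : ν ∈ Ω_M, n ∈ ℕ}`. -/
def OmegaPlus (M : Set (List ℕ)) : Set (List ℕ) :=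
  {ρ | ∃ ν, InOmega M ν ∧ ∃ n : ℕ, ρ = ν ++ [2 * n]}

/-- `B_Λ`: the reals having no initial segment in `Ω_{max Λ}⁺`. -/
def BLam (Λ : Set (List ℕ)) : Set (ℕ → ℕ) :=
  {x | ∀ η ∈ OmegaPlus (maxLam Λ), ¬ PrefixOf η x}


/-- Auxiliary: the finite segment `⟨f s, …, f (s+n-1)⟩`. -/
def seg (f : ℕ → ℕ) (s n : ℕ) : List ℕ := List.ofFn fun i : Fin n => f (s + i)

lemma length_seg (f : ℕ → ℕ) (s n : ℕ) : (seg f s n).length = n := by simp [seg]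

lemma seg_succ (f : ℕ → ℕ) (s n : ℕ) : seg f s (n + 1) = seg f s n ++ [f (s + n)] := by
  rw [seg, List.ofFn_succ', List.concat_eq_append]
  rfl

lemma seg_append (f : ℕ → ℕ) (s a : ℕ) : ∀ b, seg f s a ++ seg f (s + a) b = seg f s (a + b) := by
  intro b
  induction b with
  | zero => simp [seg]
  | succ b ih =>
      show seg f s a ++ seg f (s + a) (b + 1) = seg f s ((a + b) + 1)
      rw [seg_succ, seg_succ, ← List.append_assoc, ih, Nat.add_assoc]

lemma seg_prefix (f : ℕ → ℕ) (s : ℕ) {m n : ℕ} (h : m ≤ n) : seg f s m <+: seg f s n :=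
  ⟨seg f (s + m) (n - m), by rw [seg_append, Nat.add_sub_cancel' h]⟩

lemma getD_seg (f : ℕ → ℕ) (s n i : ℕ) (h : i < n) : (seg f s n).getD i 0 = f (s + i) := by
  rw [List.getD_eq_getElem _ _ (by simpa [length_seg] using h)]
  simp [seg]

lemma nu_eq_seg (ν : List ℕ) (f : ℕ → ℕ) (hc : HCond (ν, f)) : ν = seg f 0 ν.length := by
  apply List.ext_getElem (by simp [length_seg])
  intro i h1 h2
  have h3 := hc i h1
  rw [List.getD_eq_getElem ν 0 h1] at h3
  rw [← h3]
  simp [seg]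

lemma getD_append_last (L : List ℕ) (c i : ℕ) :
    (L ++ [c]).getD i 0 = if i < L.length then L.getD i 0 else if i = L.length then c else 0 := by
  split
  · next h =>
      rw [List.getD_eq_getElem _ _ (by simp; omega), List.getD_eq_getElem _ _ h,
        List.getElem_append_left h]
  · next h =>
      split
      · next h2 =>
          subst h2
          rw [List.getD_eq_getElem _ _ (by simp)]
          simp
      · next h2 => exact List.getD_eq_default _ _ (by simp; omega)


lemma main_step (Λ : Set (List ℕ))
    (hnil : [] ∈ Λ)
    (hpre : ∀ ρ ∈ Λ, ∀ σ : List ℕ, σ <+: ρ → σ ∈ Λ)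
    (hchild : ∀ ρ ∈ Λ, (∀ k : ℕ, ρ ++ [k] ∈ Λ) ∨ (∀ k : ℕ, ρ ++ [k] ∉ Λ))
    (hnob : ¬ ∃ x : ℕ → ℕ, ∀ n : ℕ, (List.ofFn fun i : Fin n => x i) ∈ Λ)
    (ν : List ℕ) (f : ℕ → ℕ) (hc : HCond (ν, f)) :
    ∀ d s, s ≤ ν.length → ν.length + 1 - s ≤ d →
    (s = 0 ∨ ∃ ω, InOmega (maxLam Λ) ω ∧ ∃ n : ℕ, seg f 0 s = ω ++ [2 * n + 1]) →
    ∃ η ∈ OmegaPlus (maxLam Λ), HCompat (η, fun n => η.getD n 0) (ν, f) := by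
  classical
  intro d
  induction d with
  | zero => intro s hs hd _; omega
  | succ d ih =>
    intro s hs hd hinv
    -- find the exit level of the branch `i ↦ f (s+i)` from Λ
    have hex : ∃ n, seg f s n ∉ Λ := by
      by_contra hco
      push_neg at hco
      exact hnob ⟨fun i => f (s + i), fun n => hco n⟩
    have hm_spec : seg f s (Nat.find hex) ∉ Λ := Nat.find_spec hex
    have hm_min : ∀ k < Nat.find hex, seg f s k ∈ Λ := fun k hk => not_not.mp (Nat.find_min hex hk)
    have hm_pos : 0 < Nat.find hex := by
      rcases Nat.eq_zero_or_pos (Nat.find hex) with h0 | h0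
      · exfalso; apply hm_spec; rw [h0]; simpa [seg] using hnil
      · exact h0
    obtain ⟨t, ht⟩ : ∃ t, Nat.find hex = t + 1 := ⟨Nat.find hex - 1, by omega⟩
    rw [ht] at hm_spec
    have hb : seg f s t ∈ Λ := hm_min t (by omega)
    -- the block `seg f s t` is a maximal element of Λ
    have hbmax : seg f s t ∈ maxLam Λ := by
      refine ⟨hb, fun σ hσ hpfx => ?_⟩
      by_contra hne
      obtain ⟨u, rfl⟩ := hpfx
      have hu : u ≠ [] := by rintro rfl; simp at hne
      obtain ⟨c, u', rfl⟩ := List.exists_cons_of_ne_nil hu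
      have hchl : seg f s t ++ [c] ∈ Λ := by
        apply hpre _ hσ
        exact ⟨u', by simp⟩
      rcases hchild _ hb with hall | hnone
      · exact hm_spec (by rw [seg_succ]; exact hall _)
      · exact hnone c hchl
    -- the initial part up to the end of the block is in Ω
    have homega : InOmega (maxLam Λ) (seg f 0 (s + t)) := by
      have hsplit : seg f 0 s ++ seg f s t = seg f 0 (s + t) := by
        have := seg_append f 0 s t
        rwa [Nat.zero_add] at this
      rcases hinv with rfl | ⟨ω, hω, n, hseq⟩
      · rw [← hsplit]
        simpa [seg] using InOmega.base _ hbmax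
      · rw [← hsplit, hseq, List.append_assoc]
        exact InOmega.step ω hω n _ hbmax
    by_cases hcase : ν.length ≤ s + t
    · -- Case B : the block reaches past the end of ν
      refine ⟨seg f 0 (s + t) ++ [2 * f (s + t)], ⟨_, homega, f (s + t), rfl⟩, ?_⟩
      set η := seg f 0 (s + t) ++ [2 * f (s + t)] with hη
      have hlen : η.length = s + t + 1 := by simp [hη, length_seg]
      have hνpfx : ν <+: η := by
        calc ν = seg f 0 ν.length := nu_eq_seg ν f hc
        _ <+: seg f 0 (s + t) := seg_prefix f 0 hcase
        _ <+: η := ⟨[2 * f (s + t)], rfl⟩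
      have hgetD : ∀ i, η.getD i 0 =
          if i < s + t then f i else if i = s + t then 2 * f (s + t) else 0 := by
        intro i
        rw [hη, getD_append_last, length_seg]
        split
        · next hi => rw [getD_seg f 0 (s + t) i hi, Nat.zero_add]
        · rfl
      refine ⟨(η, fun i => max (η.getD i 0) (f i)), ?_, ⟨List.prefix_refl _, fun n => le_max_left _ _⟩,
        ⟨hνpfx, fun n => le_max_right _ _⟩⟩
      intro i hi
      have hi' : i < s + t + 1 := by simpa [hlen] using hi
      show max (η.getD i 0) (f i) = η.getD i 0
      apply Nat.max_eq_left
      rw [hgetD i]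
      by_cases hlt : i < s + t
      · simp [hlt]
      · have hieq : i = s + t := by omega
        subst hieq
        rw [if_neg hlt, if_pos rfl]
        omega
    · -- the character after the block lies inside ν
      push_neg at hcase
      have hchar : f (s + t) = ν.getD (s + t) 0 := hc (s + t) hcase
      rcases Nat.even_or_odd (f (s + t)) with ⟨n, hn⟩ | ⟨n, hn⟩
      · -- Case A : even separator, η := seg f 0 (s+t+1) is a prefix of ν
        have hηeq : seg f 0 (s + t + 1) = seg f 0 (s + t) ++ [2 * n] := by
          rw [seg_succ, Nat.zero_add, hn]; ring_nf
        refine ⟨seg f 0 (s + t + 1), ⟨_, homega, n, hηeq⟩, (ν, f), hc,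
          ⟨?_, ?_⟩, ⟨List.prefix_refl _, fun i => le_refl _⟩⟩
        · calc seg f 0 (s + t + 1) <+: seg f 0 ν.length := seg_prefix f 0 (by omega)
          _ = ν := (nu_eq_seg ν f hc).symm
        · intro i
          simp only
          by_cases hi : i < s + t + 1
          · rw [getD_seg f 0 _ i hi, Nat.zero_add]
          · rw [List.getD_eq_default _ _ (by rw [length_seg]; omega)]
            exact Nat.zero_le _
      · -- Case C : odd separator, recurse
        apply ih (s + t + 1) (by omega) (by omega)
        right
        refine ⟨seg f 0 (s + t), homega, n, ?_⟩
        rw [seg_succ, Nat.zero_add, hn]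

/-- For `(Λ, h) ∈ Y_ε`, every Hechler condition `(ν, f)` is compatible
with some condition `(η, η⌢0^ω)` with `η ∈ Ω_Λ⁺`; i.e. the antichain `I_Λ` is maximal. -/
theorem ILam_is_maximal_antichain
    (ε : Ordinal) (hε : ε < (Cardinal.aleph 1).ord)
    (Λ : Set (List ℕ)) (h : List ℕ → Ordinal) (hY : MemY ε Λ h)
    (ν : List ℕ) (f : ℕ → ℕ) (hc : HCond (ν, f)) :
    ∃ η ∈ OmegaPlus (maxLam Λ),
      HCompat (η, fun n => η.getD n 0) (ν, f) := by
  obtain ⟨⟨hne, hpre, hchild, _, hnob⟩, _⟩ := hY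
  have hnil : [] ∈ Λ := by
    obtain ⟨ρ, hρ⟩ := hne
    exact hpre ρ hρ [] List.nil_prefix
  exact main_step Λ hnil hpre hchild hnob ν f hc (ν.length + 1) 0 (Nat.zero_le _)
    (by omega) (Or.inl rfl)
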